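/- Let 0 < ω < 1/2, let f_1, …, f_T : [0,1] → ℝ be continuous, let w_1, …, w_T be nonnegative reals with ∑_{t=1}^T w_t > 0, and set b = (1−2ω) Γ(1−ω)/Γ(2−2ω). Then the function h ↦ ∑_{t=1}^T w_t ∫_0^1 (f_t(τ) − h · b · τ^{−ω})² dτ on ℝ has a unique global minimizer, namely h* = (Γ(2−2ω)/Γ(1−ω)) · (∑_{t=1}^T w_t ∫_0^1 τ^{−ω} f_t(τ) dτ) / (∑_{t=1}^T w_t), where Γ is the Gamma function. -/

import Mathlib

/-- Drift reestimation for fractional Brownian motion, regular case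
(`0 < ω < 1/2`, `b = (1−2ω)Γ(1−ω)/Γ(2−2ω)`): the objective
`h ↦ ∑ w t ∫₀¹ (f t τ − h b τ^{−ω})² dτ` has the unique global minimizer
`h* = (Γ(2−2ω)/Γ(1−ω)) (∑ w t ∫₀¹ τ^{−ω} f t τ dτ) / (∑ w t)`. -/
theorem stmt_14 (ω : ℝ) (hω : 0 < ω) (hω' : ω < 1 / 2)
    (T : ℕ) (f : Fin T → ℝ → ℝ) (hf : ∀ t, Continuous (f t))
    (w : Fin T → ℝ) (hw : ∀ t, 0 ≤ w t) (hpos : 0 < ∑ t, w t) :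
    let b : ℝ := (1 - 2 * ω) * Real.Gamma (1 - ω) / Real.Gamma (2 - 2 * ω)
    let g : ℝ → ℝ := fun h =>
      ∑ t, w t * ∫ τ in (0:ℝ)..1, (f t τ - h * b * τ ^ (-ω)) ^ 2
    let hstar : ℝ := (Real.Gamma (2 - 2 * ω) / Real.Gamma (1 - ω)) *
      (∑ t, w t * ∫ τ in (0:ℝ)..1, τ ^ (-ω) * f t τ) / (∑ t, w t)
    (∀ h, g hstar ≤ g h) ∧ (∀ h, g h = g hstar ↔ h = hstar) := by
  intro b g hstar
  have hΓ1 : 0 < Real.Gamma (1 - ω) := Real.Gamma_pos_of_pos (by linarith)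
  have hΓ2 : 0 < Real.Gamma (2 - 2 * ω) := Real.Gamma_pos_of_pos (by linarith)
  have h12 : (0:ℝ) < 1 - 2 * ω := by linarith
  have hb : 0 < b := by
    apply div_pos (mul_pos h12 hΓ1) hΓ2
  set W : ℝ := ∑ t, w t with hW
  set S : ℝ := ∑ t, w t * ∫ τ in (0:ℝ)..1, τ ^ (-ω) * f t τ with hS
  set C0 : ℝ := b ^ 2 / (1 - 2 * ω) * W with hC0
  have hC0pos : 0 < C0 := by positivity
  -- integrability facts
  have hIp : IntervalIntegrable (fun τ : ℝ => τ ^ (-ω)) MeasureTheory.volume 0 1 :=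
    intervalIntegral.intervalIntegrable_rpow' (by linarith)
  have hIq : IntervalIntegrable (fun τ : ℝ => τ ^ (-(2*ω))) MeasureTheory.volume 0 1 :=
    intervalIntegral.intervalIntegrable_rpow' (by linarith)
  have hq : (∫ τ in (0:ℝ)..1, τ ^ (-(2*ω))) = 1 / (1 - 2 * ω) := by
    rw [integral_rpow (Or.inl (by linarith))]
    rw [Real.one_rpow, Real.zero_rpow (by linarith)]
    ring_nf
  -- per-t expansion
  have key : ∀ (t : Fin T) (h : ℝ),
      (∫ τ in (0:ℝ)..1, (f t τ - h * b * τ ^ (-ω)) ^ 2) =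
        (∫ τ in (0:ℝ)..1, (f t τ) ^ 2)
        - 2 * (h * b) * (∫ τ in (0:ℝ)..1, τ ^ (-ω) * f t τ)
        + (h * b) ^ 2 * (1 / (1 - 2 * ω)) := by
    intro t h
    have hI1 : IntervalIntegrable (fun τ : ℝ => (f t τ) ^ 2) MeasureTheory.volume 0 1 :=
      ((hf t).pow 2).intervalIntegrable 0 1
    have hI2 : IntervalIntegrable (fun τ : ℝ => τ ^ (-ω) * f t τ) MeasureTheory.volume 0 1 :=
      hIp.mul_continuousOn (hf t).continuousOn
    have congr1 : (∫ τ in (0:ℝ)..1, (f t τ - h * b * τ ^ (-ω)) ^ 2) =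
        ∫ τ in (0:ℝ)..1, ((f t τ) ^ 2 - 2 * (h * b) * (τ ^ (-ω) * f t τ)
          + (h * b) ^ 2 * τ ^ (-(2*ω))) := by
      apply intervalIntegral.integral_congr
      intro τ hτ
      have hτ0 : 0 ≤ τ := by
        rw [Set.uIcc_of_le (by norm_num)] at hτ
        exact hτ.1
      have hsq : (τ ^ (-ω)) ^ 2 = τ ^ (-(2*ω)) := by
        rw [← Real.rpow_natCast (τ ^ (-ω)) 2, ← Real.rpow_mul hτ0]
        norm_num
        ring_nf
      simp only
      rw [← hsq]
      ring
    rw [congr1,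
      intervalIntegral.integral_add ((hI1.sub (hI2.const_mul _))) (hIq.const_mul _),
      intervalIntegral.integral_sub hI1 (hI2.const_mul _),
      intervalIntegral.integral_const_mul, intervalIntegral.integral_const_mul, hq]
  -- quadratic form for g
  have hg : ∀ h : ℝ, g h = (∑ t, w t * ∫ τ in (0:ℝ)..1, (f t τ) ^ 2)
      - 2 * b * S * h + C0 * h ^ 2 := by
    intro h
    have : g h = ∑ t, (w t * (∫ τ in (0:ℝ)..1, (f t τ) ^ 2)
        - (2 * b * h) * (w t * ∫ τ in (0:ℝ)..1, τ ^ (-ω) * f t τ)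
        + (b ^ 2 / (1 - 2 * ω) * h ^ 2) * w t) := by
      apply Finset.sum_congr rfl
      intro t _
      rw [key t h]
      field_simp
    rw [this, Finset.sum_add_distrib, Finset.sum_sub_distrib, ← Finset.mul_sum,
      ← Finset.mul_sum, hC0]
    ring
  have hWne : W ≠ 0 := ne_of_gt hpos
  have hkey : b * S = C0 * hstar := by
    show b * S = C0 * ((Real.Gamma (2 - 2 * ω) / Real.Gamma (1 - ω)) * S / W)
    rw [hC0]
    show (1 - 2 * ω) * Real.Gamma (1 - ω) / Real.Gamma (2 - 2 * ω) * S = _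
    have hΓ2' : Real.Gamma (2 - ω * 2) ≠ 0 := by
      rw [show (2 - ω * 2) = 2 - 2 * ω by ring]; exact hΓ2.ne'
    field_simp [hΓ1.ne', hΓ2.ne', hΓ2', hWne]
    have hΓ3 : Real.Gamma (2 * (1 - ω)) ≠ 0 := by
      rw [show 2 * (1 - ω) = 2 - 2 * ω by ring]; exact hΓ2.ne'
    have hb' : b = (1 - 2 * ω) * Real.Gamma (1 - ω) / Real.Gamma (2 * (1 - ω)) := by
      show (1 - 2 * ω) * Real.Gamma (1 - ω) / Real.Gamma (2 - 2 * ω) = _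
      rw [show 2 * (1 - ω) = 2 - 2 * ω by ring]
    rw [hb']
    field_simp
  have hquad : ∀ h : ℝ, g h = g hstar + C0 * (h - hstar) ^ 2 := by
    intro h
    rw [hg h, hg hstar]
    linear_combination 2 * (hstar - h) * hkey
  constructor
  · intro h
    rw [hquad h]
    nlinarith [sq_nonneg (h - hstar), hC0pos]
  · intro h
    constructor
    · intro he
      rw [hquad h] at he
      have : C0 * (h - hstar) ^ 2 = 0 := by linarith
      have h2 : (h - hstar) ^ 2 = 0 := by
        rcases mul_eq_zero.mp this with h' | h'
        · exact absurd h' (ne_of_gt hC0pos)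
        · exact h'
      have := pow_eq_zero_iff (n := 2) (by norm_num) |>.mp h2
      linarith
    · intro he; rw [he]
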